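/- Let β₁, β₂ > 0 be real numbers satisfying 2β₁ − β₂ ≥ √2·π. Let p be analytic on the open unit disk 𝔻 with p(0) = 1, and suppose that for every z ∈ 𝔻 the value 1 + β₁·z·p′(z) + β₂·z²·p″(z) lies in the set {1 + log(w + (1 + w²)^{1/2}) : w ∈ 𝔻}. Then for every z ∈ 𝔻, p(z) ∈ {1 + log(w + (1 + w²)^{1/2}) : w ∈ 𝔻}, i.e. p(z) ≺ 1 + sinh⁻¹ z. -/

import Mathlib

set_option maxHeartbeats 1000000

open Metric Complex Filter Topology

noncomputable def Complex.abs : AbsoluteValue ℂ ℝ :=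
  IsAbsoluteValue.toAbsoluteValue (norm : ℂ → ℝ)

@[simp] lemma Complex.norm_eq_abs (z : ℂ) : ‖z‖ = Complex.abs z := rfl
lemma Complex.sq_abs (z : ℂ) : Complex.abs z ^ 2 = Complex.normSq z := Complex.sq_norm z
@[simp] lemma Complex.abs_ofReal (r : ℝ) : Complex.abs (r : ℂ) = |r| := Complex.norm_real r
lemma Complex.abs_re_le_abs (z : ℂ) : |z.re| ≤ Complex.abs z := Complex.abs_re_le_norm z
lemma Complex.abs_im_le_abs (z : ℂ) : |z.im| ≤ Complex.abs z := Complex.abs_im_le_norm z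
lemma Complex.continuous_abs : Continuous Complex.abs := continuous_norm

noncomputable def myΛ : ℝ := Real.log (1 + Real.sqrt 2)
noncomputable def myM : ℝ := Real.sqrt (myΛ^2 + Real.pi^2/4)

lemma cpow_half_sq {ζ : ℂ} (h : ζ ≠ 0) : (ζ ^ ((1:ℂ)/2))^2 = ζ := by
  rw [sq, ← Complex.cpow_add _ _ h]; norm_num

lemma zeta_re_pos {w : ℂ} (hw : Complex.abs w < 1) : 0 < (1 + w^2).re := by
  have hxy : w.re^2 + w.im^2 < 1 := by
    have := Complex.sq_abs w
    nlinarith [Complex.abs.nonneg w, Complex.normSq_apply w]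
  have : (1 + w^2).re = 1 + (w.re^2 - w.im^2) := by
    simp [pow_two, Complex.mul_re]; try ring
  nlinarith

lemma keyRe {w : ℂ} (hw : Complex.abs w < 1) :
    w.re^2 < ((1 + w^2) ^ ((1:ℂ)/2)).re^2 := by
  set ζ := 1 + w^2 with hζ
  have hre : 0 < ζ.re := zeta_re_pos hw
  have hζ0 : ζ ≠ 0 := fun h => by rw [h] at hre; simp at hre
  set s := ζ ^ ((1:ℂ)/2) with hs
  have hs2 : s^2 = ζ := cpow_half_sq hζ0
  have habs : Complex.abs s ^ 2 = Complex.abs ζ := by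
    rw [← map_pow, hs2]
  have h1 : s.re^2 + s.im^2 = Complex.abs ζ := by
    rw [← habs, Complex.sq_abs, Complex.normSq_apply]; ring
  have h2 : s.re^2 - s.im^2 = ζ.re := by
    rw [← hs2]; simp [pow_two, Complex.mul_re]; try ring
  have hζre : ζ.re = 1 + (w.re^2 - w.im^2) := by
    simp [hζ, pow_two, Complex.mul_re]; try ring
  have habsζ : 0 < Complex.abs ζ := Complex.abs.pos hζ0
  have hxy : w.re^2 + w.im^2 < 1 := by
    have := Complex.sq_abs w
    nlinarith [Complex.abs.nonneg w, Complex.normSq_apply w]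
  nlinarith

lemma cpow_half_re_nonneg (ζ : ℂ) : 0 ≤ (ζ ^ ((1:ℂ)/2)).re := by
  rcases eq_or_ne ζ 0 with rfl | h
  · rw [Complex.zero_cpow (by norm_num)]; simp
  · rw [Complex.cpow_def_of_ne_zero h, Complex.exp_re]
    apply mul_nonneg (Real.exp_nonneg _)
    apply Real.cos_nonneg_of_mem_Icc
    have h1 : -Real.pi < (Complex.log ζ).im := by
      rw [Complex.log_im]; exact Complex.neg_pi_lt_arg ζ
    have h2 : (Complex.log ζ).im ≤ Real.pi := Complex.log_im_le_pi ζ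
    have h3 : (Complex.log ζ * ((1:ℂ)/2)).im = (Complex.log ζ).im / 2 := by
      simp [Complex.mul_im]; ring
    rw [h3]
    constructor <;> [linarith [Real.pi_pos]; linarith]

lemma keyVre {w : ℂ} (hw : Complex.abs w < 1) :
    0 < (w + (1 + w^2) ^ ((1:ℂ)/2)).re := by
  have h1 := keyRe hw
  have h2 := cpow_half_re_nonneg (1 + w^2)
  rw [Complex.add_re]
  nlinarith [abs_nonneg w.re, _root_.sq_abs w.re, neg_abs_le w.re]

lemma keyLog {w : ℂ} (hw : Complex.abs w < 1) :
    Complex.abs (Complex.log (w + (1 + w^2) ^ ((1:ℂ)/2))) < myM := by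
  set ζ := 1 + w^2 with hζ
  have hre : 0 < ζ.re := zeta_re_pos hw
  have hζ0 : ζ ≠ 0 := fun h => by rw [h] at hre; simp at hre
  set s := ζ ^ ((1:ℂ)/2) with hs
  have hs2 : s^2 = ζ := cpow_half_sq hζ0
  have hsr2 : Real.sqrt 2 ^ 2 = 2 := Real.sq_sqrt (by norm_num)
  have hsr_pos : (1:ℝ) < Real.sqrt 2 := by nlinarith [Real.sqrt_nonneg 2]
  have habs_s : Complex.abs s < Real.sqrt 2 := by
    have habs : Complex.abs s ^ 2 = Complex.abs ζ := by rw [← map_pow, hs2]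
    have : Complex.abs ζ < 2 := by
      calc Complex.abs ζ ≤ Complex.abs 1 + Complex.abs (w^2) := Complex.abs.add_le _ _
        _ < 2 := by rw [map_pow]; simp; nlinarith [Complex.abs.nonneg w]
    nlinarith [Complex.abs.nonneg s, Real.sqrt_nonneg 2]
  set v := w + s with hv
  have habs_v : Complex.abs v < 1 + Real.sqrt 2 := by
    calc Complex.abs v ≤ Complex.abs w + Complex.abs s := Complex.abs.add_le _ _
      _ < 1 + Real.sqrt 2 := by linarith
  have hinv : v * (s - w) = 1 := by rw [hv]; linear_combination hs2
  have habs_sw : Complex.abs (s - w) < 1 + Real.sqrt 2 := by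
    have h0 : Complex.abs (s - w) ≤ Complex.abs s + Complex.abs w := by
      rw [sub_eq_add_neg]; simpa using Complex.abs.add_le s (-w)
    linarith
  have hprod : Complex.abs v * Complex.abs (s - w) = 1 := by
    rw [← map_mul, hinv, map_one]
  have habs_v_pos : 0 < Complex.abs v := by
    rcases eq_or_lt_of_le (Complex.abs.nonneg v) with h | h
    · exfalso; rw [← h] at hprod; simp at hprod
    · exact h
  have habs_v_lb : Real.sqrt 2 - 1 < Complex.abs v := by
    have hsw_pos : 0 < Complex.abs (s - w) := by
      rcases eq_or_lt_of_le (Complex.abs.nonneg (s-w)) with h | h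
      · exfalso; rw [← h] at hprod; simp at hprod
      · exact h
    nlinarith
  have hvre : 0 < v.re := keyVre hw
  have hΛpos : 0 < myΛ := Real.log_pos (by linarith)
  have hre_ub : Real.log (Complex.abs v) < myΛ := Real.log_lt_log habs_v_pos habs_v
  have hre_lb : -myΛ < Real.log (Complex.abs v) := by
    have h1 : Real.sqrt 2 - 1 = (1 + Real.sqrt 2)⁻¹ := by
      exact eq_inv_of_mul_eq_one_left (by nlinarith)
    have h2 : Real.log (Real.sqrt 2 - 1) = -myΛ := by
      rw [h1, Real.log_inv, myΛ]
    rw [← h2]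
    exact Real.log_lt_log (by linarith) habs_v_lb
  have harg : |Complex.arg v| < Real.pi / 2 :=
    Complex.abs_arg_lt_pi_div_two_iff.mpr (Or.inl hvre)
  have hL : (Complex.log v).re = Real.log (Complex.abs v) := Complex.log_re v
  have hLi : (Complex.log v).im = Complex.arg v := Complex.log_im v
  have hsq : Complex.abs (Complex.log v) ^ 2 = (Complex.log v).re^2 + (Complex.log v).im^2 := by
    rw [Complex.sq_abs, Complex.normSq_apply]; ring
  rw [myM, Real.lt_sqrt (Complex.abs.nonneg _)]
  have h1 : (Complex.log v).re^2 < myΛ^2 := by rw [hL]; nlinarith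
  have h2 : (Complex.log v).im^2 < (Real.pi/2)^2 := by
    rw [hLi]; nlinarith [abs_nonneg (Complex.arg v), _root_.sq_abs (Complex.arg v)]
  nlinarith

lemma sqrt2_sq : Real.sqrt 2 ^ 2 = 2 := Real.sq_sqrt (by norm_num)
lemma sqrt2_gt : (1.41:ℝ) < Real.sqrt 2 := by
  nlinarith [sqrt2_sq, Real.sqrt_nonneg 2]
lemma sqrt2_lt : Real.sqrt 2 < 1.42 := by
  nlinarith [sqrt2_sq, Real.sqrt_nonneg 2]

lemma myΛ_pos : 0 < myΛ := Real.log_pos (by nlinarith [sqrt2_gt])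

lemma myΛ_lt_pi_div_two : myΛ < Real.pi / 2 := by
  have h1 : myΛ ≤ (1 + Real.sqrt 2) - 1 := Real.log_le_sub_one_of_pos (by nlinarith [sqrt2_gt])
  have := Real.pi_gt_d6
  nlinarith [sqrt2_lt]

lemma sinh_myΛ : Real.sinh myΛ = 1 := by
  have h0 : (0:ℝ) < 1 + Real.sqrt 2 := by nlinarith [sqrt2_gt]
  rw [Real.sinh_eq, myΛ, Real.exp_log h0, Real.exp_neg, Real.exp_log h0]
  rw [div_eq_one_iff_eq (by norm_num)]
  field_simp
  nlinarith [sqrt2_sq]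

lemma sinh_decomp (u : ℂ) : Complex.sinh u =
    (Real.sinh u.re * Real.cos u.im : ℝ) + (Real.cosh u.re * Real.sin u.im : ℝ) * I := by
  have := Complex.re_add_im u
  nth_rewrite 1 [← this]
  rw [Complex.sinh_add, Complex.sinh_mul_I, Complex.cosh_mul_I]
  push_cast [← Complex.ofReal_sinh, ← Complex.ofReal_cosh, ← Complex.ofReal_cos, ← Complex.ofReal_sin]
  ring

lemma cosh_decomp (u : ℂ) : Complex.cosh u =
    (Real.cosh u.re * Real.cos u.im : ℝ) + (Real.sinh u.re * Real.sin u.im : ℝ) * I := by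
  have := Complex.re_add_im u
  nth_rewrite 1 [← this]
  rw [Complex.cosh_add, Complex.sinh_mul_I, Complex.cosh_mul_I]
  push_cast [← Complex.ofReal_sinh, ← Complex.ofReal_cosh, ← Complex.ofReal_cos, ← Complex.ofReal_sin]
  ring

lemma abs_sinh_lt {u : ℂ} (h : Complex.abs u < myΛ) : Complex.abs (Complex.sinh u) < 1 := by
  set x := u.re; set y := u.im; set r := Complex.abs u
  have hr0 : 0 ≤ r := Complex.abs.nonneg u
  have hr2 : x^2 + y^2 = r^2 := by
    rw [Complex.sq_abs, Complex.normSq_apply]; ring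
  have hsq : Complex.abs (Complex.sinh u) ^ 2
      = (Real.sinh x * Real.cos y)^2 + (Real.cosh x * Real.sin y)^2 := by
    rw [sinh_decomp u, Complex.sq_abs, Complex.normSq_apply]
    simp [Complex.sinh_ofReal_re, Complex.cos_ofReal_re, Complex.sin_ofReal_re, Complex.cosh_ofReal_re]
    ring
  have hid1 : Real.sin y ^ 2 + Real.cos y ^2 = 1 := Real.sin_sq_add_cos_sq y
  have hid2 : Real.cosh x ^2 = Real.sinh x ^2 + 1 := Real.cosh_sq x
  have hsin : Real.sin y ^ 2 ≤ y^2 := by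
    have h' := Real.abs_sin_le_abs (x := y)
    calc Real.sin y ^2 = |Real.sin y|^2 := (_root_.sq_abs _).symm
      _ ≤ |y|^2 := by nlinarith [abs_nonneg (Real.sin y)]
      _ = y^2 := _root_.sq_abs y
  -- sinh x ^2 + y^2 ≤ sinh r ^2
  have hxr : |x| ≤ r := Complex.abs_re_le_abs u
  have hmono := Real.sinh_sub_id_strictMono.monotone
  have h1 : Real.sinh r - Real.sinh |x| ≥ r - |x| := by
    have := hmono (a := |x|) (b := r) hxr
    simp only at this
    linarith
  have h2 : Real.sinh r + Real.sinh |x| ≥ r + |x| := by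
    have ha := Real.self_le_sinh_iff.mpr (abs_nonneg x)
    have hb := Real.self_le_sinh_iff.mpr hr0
    linarith
  have h3 : Real.sinh r ^2 - Real.sinh |x| ^2 ≥ r^2 - x^2 := by
    have hnn : 0 ≤ r - |x| := by linarith
    have hnn2 : 0 ≤ r + |x| := by positivity
    nlinarith [_root_.sq_abs x]
  have hsabs : Real.sinh |x| ^ 2 = Real.sinh x ^2 := by
    rcases abs_cases x with ⟨he, _⟩ | ⟨he, _⟩ <;> rw [he] <;> simp [Real.sinh_neg] <;> ring
  have hΛ : Real.sinh r < 1 := by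
    rw [← sinh_myΛ]
    exact Real.sinh_lt_sinh.mpr h
  have hrpos : 0 ≤ Real.sinh r := Real.sinh_nonneg_iff.mpr hr0
  have : Complex.abs (Complex.sinh u) ^ 2 < 1 := by
    rw [hsq]; nlinarith
  nlinarith [Complex.abs.nonneg (Complex.sinh u)]

lemma myM_pos : 0 < myM := Real.sqrt_pos.mpr (by positivity)

lemma myΛ_ge : (0.8:ℝ) ≤ myΛ := by
  rw [myΛ, Real.le_log_iff_exp_le (by nlinarith [sqrt2_gt])]
  have e1 : Real.exp 0.1 ≤ 10/9 := by
    have h := Real.add_one_le_exp (-0.1)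
    have h2 : Real.exp 0.1 = (Real.exp (-0.1))⁻¹ := by
      rw [← Real.exp_neg]; norm_num
    rw [h2]
    rw [inv_le_comm₀ (Real.exp_pos _) (by norm_num)]
    linarith
  have e2 : Real.exp 0.8 = Real.exp 0.1 ^ (8:ℕ) := by
    rw [← Real.exp_nat_mul]; norm_num
  have e3 : Real.exp 0.1 ^ (8:ℕ) ≤ (10/9:ℝ)^(8:ℕ) :=
    pow_le_pow_left₀ (Real.exp_pos _).le e1 8
  have e4 : ((10:ℝ)/9)^(8:ℕ) ≤ 1 + Real.sqrt 2 := by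
    nlinarith [sqrt2_gt]
  linarith [e2 ▸ le_trans e3 e4]

lemma myM_le : myM ≤ Real.sqrt 2 * Real.pi / 2 * myΛ := by
  have hΛ := myΛ_ge
  have hπ := Real.pi_gt_d6
  have hy : 0 ≤ Real.sqrt 2 * Real.pi / 2 * myΛ := by positivity
  rw [myM]
  rw [show Real.sqrt 2 * Real.pi / 2 * myΛ = Real.sqrt ((Real.sqrt 2 * Real.pi / 2 * myΛ)^2)
    from (Real.sqrt_sq hy).symm]
  apply Real.sqrt_le_sqrt
  have hexp : (Real.sqrt 2 * Real.pi / 2 * myΛ)^2 = Real.pi^2 * myΛ^2 / 2 := by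
    rw [mul_pow, div_pow, mul_pow, sqrt2_sq]; ring
  rw [hexp]
  have hP : (9.86:ℝ) ≤ Real.pi^2 := by nlinarith
  have hL : (0.64:ℝ) ≤ myΛ^2 := by nlinarith
  have key : (Real.pi^2/2 - 1) * 0.64 ≤ (Real.pi^2/2 - 1) * myΛ^2 := by
    apply mul_le_mul_of_nonneg_left hL
    nlinarith
  nlinarith [key, hP]



lemma recon {u : ℂ} (h : Complex.abs u < myΛ) :
    ∃ w ∈ ball (0:ℂ) 1, u = Complex.log (w + (1 + w^2) ^ ((1:ℂ)/2)) := by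
  have hw : Complex.abs (Complex.sinh u) < 1 := abs_sinh_lt h
  refine ⟨Complex.sinh u, by simpa [mem_ball, Complex.dist_eq] using hw, ?_⟩
  have hy : |u.im| < Real.pi / 2 := by
    calc |u.im| ≤ Complex.abs u := Complex.abs_im_le_abs u
      _ < Real.pi / 2 := lt_trans h myΛ_lt_pi_div_two
  have hcoshre : 0 < (Complex.cosh u).re := by
    rw [cosh_decomp]
    simp only [Complex.add_re, Complex.ofReal_re, Complex.mul_re, Complex.I_re, Complex.I_im,
      Complex.ofReal_im]
    have hcos : 0 < Real.cos u.im := by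
      apply Real.cos_pos_of_mem_Ioo
      constructor <;> [linarith [abs_lt.mp hy]; linarith [abs_lt.mp hy]]
    have := Real.cosh_pos u.re
    ring_nf
    nlinarith
  have h1 : 1 + Complex.sinh u ^ 2 = Complex.cosh u ^ 2 := by
    have := Complex.cosh_sq_sub_sinh_sq u; linear_combination -this
  have hζ0 : (1 + Complex.sinh u ^ 2) ≠ 0 := by
    rw [h1]
    apply pow_ne_zero
    intro hc
    rw [hc] at hcoshre; simp at hcoshre
  set s := (1 + Complex.sinh u ^ 2) ^ ((1:ℂ)/2) with hs
  have hs2 : s ^ 2 = Complex.cosh u ^ 2 := by rw [cpow_half_sq hζ0, h1]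
  have hsre : 0 ≤ s.re := cpow_half_re_nonneg _
  have hfac : (s - Complex.cosh u) * (s + Complex.cosh u) = 0 := by linear_combination hs2
  rcases mul_eq_zero.mp hfac with hc | hc
  · have hse : s = Complex.cosh u := by linear_combination hc
    rw [hse, Complex.sinh_add_cosh, Complex.log_exp]
    · linarith [abs_lt.mp hy, Real.pi_pos]
    · linarith [abs_lt.mp hy, Real.pi_pos]
  · exfalso
    have hse : s = -Complex.cosh u := by linear_combination hc
    have : s.re = -(Complex.cosh u).re := by rw [hse]; simp
    linarith

lemma core (β₁ β₂ M : ℝ) (hβ₁ : 0 < β₁) (hβ₂ : 0 < β₂) (hM : 0 < M)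
    (p : ℂ → ℂ) (hp : AnalyticOnNhd ℂ p (ball 0 1)) (hp0 : p 0 = 1)
    (hgball : ∀ ζ ∈ ball (0:ℂ) 1,
      Complex.abs ((β₁:ℂ)*ζ*deriv p ζ + (β₂:ℂ)*ζ^2*deriv (deriv p) ζ) < M)
    {z : ℂ} (hz : z ∈ ball (0:ℂ) 1) :
    Complex.abs (p z - 1) ≤ M * Complex.abs z / β₁ := by
  have hzlt : Complex.abs z < 1 := by simpa [mem_ball, Complex.dist_eq] using hz
  set d := deriv p with hdd
  set d2 := deriv d with hdd2
  set g : ℂ → ℂ := fun ζ => (β₁:ℂ)*ζ*d ζ + (β₂:ℂ)*ζ^2*d2 ζ with hgdef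
  have hd : AnalyticOnNhd ℂ d (ball 0 1) := hp.deriv
  have hd2 : AnalyticOnNhd ℂ d2 (ball 0 1) := hd.deriv
  have hdc : ContinuousOn d (ball 0 1) := hd.continuousOn
  have hd2c : ContinuousOn d2 (ball 0 1) := hd2.continuousOn
  have hga : AnalyticOnNhd ℂ g (ball 0 1) := by
    intro ζ hζ
    exact ((analyticAt_const.mul analyticAt_id).mul (hd ζ hζ)).add
      ((analyticAt_const.mul (analyticAt_id.pow 2)).mul (hd2 ζ hζ))
  have hg0 : g 0 = 0 := by simp [hgdef]
  -- Schwarz lemma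
  have hS : ∀ ζ ∈ ball (0:ℂ) 1, Complex.abs (g ζ) ≤ M * Complex.abs ζ := by
    intro ζ hζ
    have hmaps : Set.MapsTo g (ball (0:ℂ) 1) (ball (g 0) M) := by
      intro y hy
      rw [hg0]
      simpa [mem_ball, Complex.dist_eq] using hgball y hy
    have := Complex.dist_le_div_mul_dist_of_mapsTo_ball hga.differentiableOn (hmaps.mono_right ball_subset_closedBall) hζ
    simpa [Complex.dist_eq, hg0] using this
  -- membership of segment
  have hzmem : ∀ t : ℝ, 0 ≤ t → t ≤ 1 → ((t:ℂ)*z) ∈ ball (0:ℂ) 1 := by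
    intro t h0 h1
    simp only [mem_ball, Complex.dist_eq, sub_zero, Complex.norm_eq_abs, map_mul, Complex.abs_ofReal]
    calc |t| * Complex.abs z ≤ 1 * Complex.abs z := by
          apply mul_le_mul_of_nonneg_right _ (Complex.abs.nonneg z)
          rw [_root_.abs_of_nonneg h0]; exact h1
      _ < 1 := by simpa using hzlt
  set K := M * Complex.abs z / β₁ with hK
  have hK0 : 0 ≤ K := by positivity
  -- derivative helpers
  have hPd : ∀ t : ℝ, 0 ≤ t → t ≤ 1 → HasDerivAt (fun y : ℝ => p ((y:ℂ)*z)) (d ((t:ℂ)*z) * z) t := by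
    intro t h0 h1
    have h1' : HasDerivAt p (d ((t:ℂ)*z)) ((t:ℂ)*z) :=
      ((hp _ (hzmem t h0 h1)).differentiableAt).hasDerivAt
    have := (HasDerivAt.comp (↑t : ℂ) h1' (hasDerivAt_mul_const z)).comp_ofReal
    simpa [Function.comp] using this
  have hDd : ∀ t : ℝ, 0 ≤ t → t ≤ 1 → HasDerivAt (fun y : ℝ => d ((y:ℂ)*z)) (d2 ((t:ℂ)*z) * z) t := by
    intro t h0 h1
    have h1' : HasDerivAt d (d2 ((t:ℂ)*z)) ((t:ℂ)*z) :=
      ((hd _ (hzmem t h0 h1)).differentiableAt).hasDerivAt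
    have := (HasDerivAt.comp (↑t : ℂ) h1' (hasDerivAt_mul_const z)).comp_ofReal
    simpa [Function.comp] using this
  have hcoe : ∀ t : ℝ, HasDerivAt (fun y : ℝ => (y:ℂ)*z) z t := by
    intro t
    simpa using (hasDerivAt_mul_const z).comp_ofReal (z := t)
  -- the functions
  set v : ℝ → ℂ := fun t => ((t:ℂ)*z) * d ((t:ℂ)*z) with hvdef
  set a : ℝ := β₁/β₂ - 1 with hadef
  have ha : -1 < a := by
    rw [hadef]
    have h' : 0 < β₁/β₂ := by positivity
    linarith
  have ha1 : a + 1 = β₁/β₂ := by rw [hadef]; ring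
  have hba : β₂ * (a+1) = β₁ := by rw [ha1]; field_simp
  set w : ℝ → ℂ := fun t => (t ^ a : ℝ) • v t with hwdef
  set G : ℝ → ℂ := fun t => g ((t:ℂ)*z) with hGdef
  -- derivative of w
  have hww : ∀ s : ℝ, 0 < s → s ≤ 1 →
      HasDerivAt w ((s^(a-1) / β₂ : ℝ) • G s) s := by
    intro s hs0 hs1
    have hvd : HasDerivAt v (z * d ((s:ℂ)*z) + ((s:ℂ)*z) * (d2 ((s:ℂ)*z) * z)) s :=
      (hcoe s).mul (hDd s hs0.le hs1)
    have hr : HasDerivAt (fun y : ℝ => y ^ a) (a * s ^ (a-1)) s :=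
      Real.hasDerivAt_rpow_const (Or.inl hs0.ne')
    have hcomb := hr.smul hvd
    refine hcomb.congr_deriv ?_
    symm
    have hsa : s^a = s^(a-1) * s := by
      rw [← Real.rpow_add_one hs0.ne' (a-1)]; ring_nf
    have hca : (a:ℂ) = (β₁:ℂ)/(β₂:ℂ) - 1 := by
      rw [hadef]; push_cast; ring
    rw [Complex.real_smul, Complex.real_smul, Complex.real_smul, hsa]
    push_cast
    rw [hGdef, hgdef]
    have hβ₂0 : (β₂:ℂ) ≠ 0 := by exact_mod_cast hβ₂.ne'
    have hba' : ((β₁:ℝ):ℂ) = ((β₂:ℝ):ℂ) * ((a:ℝ):ℂ) + ((β₂:ℝ):ℂ) := by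
      have : ((β₂ * (a+1) : ℝ):ℂ) = ((β₁:ℝ):ℂ) := by exact_mod_cast congrArg (fun x : ℝ => (x:ℂ)) hba
      push_cast at this
      linear_combination -this
    rw [hba']
    field_simp
    ring
  -- ε-approximation bound
  have hwest : ∀ t₀ : ℝ, 0 < t₀ → t₀ ≤ 1 → ∀ ε : ℝ, 0 < ε → ε ≤ t₀ →
      Complex.abs (w t₀) ≤ Complex.abs (w ε) + K * t₀^(a+1) := by
    intro t₀ ht₀0 ht₀1 ε hε0 hεt
    have huIcc : Set.uIcc ε t₀ = Set.Icc ε t₀ := Set.uIcc_of_le hεt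
    have hderiv : ∀ s ∈ Set.uIcc ε t₀, HasDerivAt w ((s^(a-1) / β₂ : ℝ) • G s) s := by
      intro s hs
      rw [huIcc] at hs
      exact hww s (lt_of_lt_of_le hε0 hs.1) (le_trans hs.2 ht₀1)
    have hEcont : ContinuousOn (fun s : ℝ => (s^(a-1) / β₂ : ℝ) • G s) (Set.uIcc ε t₀) := by
      rw [huIcc]
      apply ContinuousOn.smul (f := fun s : ℝ => s^(a-1) / β₂) (g := G)
      · intro s hs
        exact (((Real.continuousAt_rpow_const s (a-1)
          (Or.inl (lt_of_lt_of_le hε0 hs.1).ne')).div_const β₂)).continuousWithinAt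
      · rw [hGdef]
        have hc1 : Continuous (fun s : ℝ => (s:ℂ)*z) := by continuity
        have hgc : ContinuousOn g (ball (0:ℂ) 1) := hga.continuousOn
        apply hgc.comp hc1.continuousOn
        intro s hs
        exact hzmem s (le_trans hε0.le hs.1) (le_trans hs.2 ht₀1)
    have hEint : IntervalIntegrable (fun s : ℝ => (s^(a-1) / β₂ : ℝ) • G s)
        MeasureTheory.volume ε t₀ := hEcont.intervalIntegrable
    have hFTC := intervalIntegral.integral_eq_sub_of_hasDerivAt hderiv hEint
    -- bound the integral
    have hBint : IntervalIntegrable (fun s : ℝ => (M * Complex.abs z / β₂) * s^a)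
        MeasureTheory.volume ε t₀ :=
      (intervalIntegral.intervalIntegrable_rpow' ha).const_mul _
    have hbound : ∀ s ∈ Set.uIoc ε t₀,
        ‖(s^(a-1) / β₂ : ℝ) • G s‖ ≤ (M * Complex.abs z / β₂) * s^a := by
      intro s hs
      rw [Set.uIoc_of_le hεt] at hs
      have hs0 : 0 < s := lt_trans hε0 hs.1
      have hsmem := hzmem s hs0.le (le_trans hs.2 ht₀1)
      have hGb : Complex.abs (G s) ≤ M * (s * Complex.abs z) := by
        have := hS _ hsmem
        simpa [hGdef, map_mul, Complex.abs_ofReal, abs_of_pos hs0] using this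
      have hrp : (0:ℝ) < s^(a-1) := Real.rpow_pos_of_pos hs0 _
      rw [norm_smul]
      simp only [Real.norm_eq_abs, Complex.norm_eq_abs]
      rw [abs_of_pos (by positivity : (0:ℝ) < s^(a-1)/β₂)]
      calc s^(a-1)/β₂ * Complex.abs (G s) ≤ s^(a-1)/β₂ * (M * (s * Complex.abs z)) := by
            apply mul_le_mul_of_nonneg_left hGb (by positivity)
        _ = (M * Complex.abs z / β₂) * (s^(a-1) * s) := by ring
        _ = (M * Complex.abs z / β₂) * s^a := by
            rw [← Real.rpow_add_one hs0.ne' (a-1)]; ring_nf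
    have hnorm := intervalIntegral.norm_integral_le_of_norm_le hεt
      (Filter.Eventually.of_forall fun s hs => hbound s (by rw [Set.uIoc_of_le hεt]; exact hs)) hBint
    rw [hFTC] at hnorm
    have hIB : ∫ s in ε..t₀, (M * Complex.abs z / β₂) * s^a
        = (M * Complex.abs z / β₂) * ((t₀^(a+1) - ε^(a+1))/(a+1)) := by
      rw [intervalIntegral.integral_const_mul, integral_rpow (Or.inl ha)]
    rw [hIB] at hnorm
    have hεnn : 0 ≤ ε^(a+1) := Real.rpow_nonneg hε0.le _
    have hεle : ε^(a+1) ≤ t₀^(a+1) := Real.rpow_le_rpow hε0.le hεt (by linarith)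
    have ha1pos : 0 < a + 1 := by linarith
    have hCnn : 0 ≤ M * Complex.abs z / β₂ := by positivity
    have habs_eq : |(M * Complex.abs z / β₂) * ((t₀^(a+1) - ε^(a+1))/(a+1))|
        = (M * Complex.abs z / β₂) * ((t₀^(a+1) - ε^(a+1))/(a+1)) := by
      apply _root_.abs_of_nonneg
      apply mul_nonneg hCnn
      apply div_nonneg (by linarith) ha1pos.le
    have hKeq : (M * Complex.abs z / β₂) / (a+1) = K := by
      rw [hK, ← hba]
      field_simp
    have hstep : (M * Complex.abs z / β₂) * ((t₀^(a+1) - ε^(a+1))/(a+1)) ≤ K * t₀^(a+1) := by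
      have h1 : (M * Complex.abs z / β₂) * ((t₀^(a+1) - ε^(a+1))/(a+1))
          = (M * Complex.abs z / β₂ / (a+1)) * (t₀^(a+1) - ε^(a+1)) := by ring
      rw [h1, hKeq]
      nlinarith
    have htri : Complex.abs (w t₀) ≤ Complex.abs (w ε) + Complex.abs (w t₀ - w ε) := by
      simpa using Complex.abs.add_le (w ε) (w t₀ - w ε)
    have : Complex.abs (w t₀ - w ε) ≤ K * t₀^(a+1) := le_trans hnorm hstep
    linarith
  -- bound on v
  have hvb : ∀ t₀ : ℝ, 0 < t₀ → t₀ ≤ 1 → Complex.abs (v t₀) ≤ K * t₀ := by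
    intro t₀ ht0 ht1
    have hOK : Complex.abs (w t₀) ≤ K * t₀^(a+1) := by
      have hev : ∀ᶠ ε in nhdsWithin (0:ℝ) (Set.Ioi 0),
          Complex.abs (w t₀) ≤ Complex.abs (w ε) + K * t₀^(a+1) := by
        filter_upwards [Ioc_mem_nhdsGT ht0] with ε hε
        exact hwest t₀ ht0 ht1 ε hε.1 hε.2
      have hlim0 : Tendsto (fun ε : ℝ => Complex.abs (w ε))
          (nhdsWithin (0:ℝ) (Set.Ioi 0)) (𝓝 0) := by
        have heq : ∀ᶠ (ε : ℝ) in nhdsWithin (0:ℝ) (Set.Ioi 0),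
            ε^(a+1) * (Complex.abs z * Complex.abs (d (((ε:ℝ):ℂ)*z))) = Complex.abs (w ε) := by
          filter_upwards [self_mem_nhdsWithin] with ε hε
          have hε0 : (0:ℝ) < ε := hε
          have h1 : Complex.abs (w ε)
              = |((ε:ℝ)^a : ℝ)| * (|ε| * (Complex.abs z * Complex.abs (d (((ε:ℝ):ℂ)*z)))) := by
            rw [hwdef]
            simp only [hvdef, Complex.real_smul, map_mul, Complex.abs_ofReal]
            ring
          rw [h1, _root_.abs_of_nonneg (Real.rpow_nonneg hε0.le a), _root_.abs_of_pos hε0,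
            Real.rpow_add_one hε0.ne' a]
          ring
        have hT1 : Tendsto (fun ε : ℝ => ε^(a+1)) (nhdsWithin (0:ℝ) (Set.Ioi 0)) (𝓝 0) := by
          have hc : ContinuousAt (fun ε : ℝ => ε^(a+1)) 0 :=
            Real.continuousAt_rpow_const 0 (a+1) (Or.inr (by linarith))
          have h2 := hc.tendsto
          rw [Real.zero_rpow (by linarith : a+1 ≠ 0)] at h2
          exact h2.mono_left nhdsWithin_le_nhds
        have hT2 : Tendsto (fun ε : ℝ => Complex.abs z * Complex.abs (d (((ε:ℝ):ℂ)*z)))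
            (nhdsWithin (0:ℝ) (Set.Ioi 0)) (𝓝 (Complex.abs z * Complex.abs (d ((0:ℝ)*z)))) := by
          have h2 : Continuous (fun ε : ℝ => ((ε:ℝ):ℂ)*z) := by continuity
          have h1 : ContinuousAt d (((0:ℝ):ℂ)*z) := by
            have h0 : ((0:ℝ):ℂ)*z ∈ ball (0:ℂ) 1 := by
              simp [mem_ball]
            exact (hd _ h0).continuousAt
          have h3 : ContinuousAt (fun ε : ℝ => d (((ε:ℝ):ℂ)*z)) 0 :=
            ContinuousAt.comp (g := d) (f := fun ε : ℝ => ((ε:ℝ):ℂ)*z) (x := (0:ℝ))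
              (by simpa using h1) h2.continuousAt
          have h4 : ContinuousAt (fun ε : ℝ => Complex.abs z * Complex.abs (d (((ε:ℝ):ℂ)*z))) 0 :=
            continuousAt_const.mul (Complex.continuous_abs.continuousAt.comp h3)
          exact h4.tendsto.mono_left nhdsWithin_le_nhds
        have hprod := hT1.mul hT2
        rw [zero_mul] at hprod
        exact Tendsto.congr' heq hprod
      have hTend : Tendsto (fun ε : ℝ => Complex.abs (w ε) + K * t₀^(a+1))
          (nhdsWithin (0:ℝ) (Set.Ioi 0)) (𝓝 (0 + K * t₀^(a+1))) :=
        hlim0.add tendsto_const_nhds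
      have hfin := ge_of_tendsto hTend hev
      linarith
    have hta : 0 < t₀^a := Real.rpow_pos_of_pos ht0 a
    have habsw : Complex.abs (w t₀) = t₀^a * Complex.abs (v t₀) := by
      rw [hwdef]
      simp only [Complex.real_smul, map_mul, Complex.abs_ofReal]
      rw [_root_.abs_of_pos hta]
    rw [habsw, Real.rpow_add_one ht0.ne' a] at hOK
    have hOK2 : t₀^a * Complex.abs (v t₀) ≤ t₀^a * (K * t₀) := by
      calc t₀^a * Complex.abs (v t₀) ≤ K * (t₀^a * t₀) := hOK
        _ = t₀^a * (K * t₀) := by ring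
    exact le_of_mul_le_mul_left hOK2 hta
  -- final integration
  have hq : ∀ t ∈ Set.uIcc (0:ℝ) 1, HasDerivAt (fun y : ℝ => p ((y:ℂ)*z)) (d ((t:ℂ)*z) * z) t := by
    intro t ht
    rw [Set.uIcc_of_le zero_le_one] at ht
    exact hPd t ht.1 ht.2
  have hVc : ContinuousOn (fun t : ℝ => d ((t:ℂ)*z) * z) (Set.uIcc (0:ℝ) 1) := by
    rw [Set.uIcc_of_le zero_le_one]
    apply ContinuousOn.mul _ continuousOn_const
    apply hdc.comp (Continuous.continuousOn (by continuity : Continuous fun t : ℝ => ((t:ℝ):ℂ)*z))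
    intro t ht
    exact hzmem t ht.1 ht.2
  have hFTC2 := intervalIntegral.integral_eq_sub_of_hasDerivAt hq hVc.intervalIntegrable
  have hbound2 : ∀ t ∈ Set.uIoc (0:ℝ) 1, ‖d ((t:ℂ)*z) * z‖ ≤ K := by
    intro t ht
    rw [Set.uIoc_of_le zero_le_one] at ht
    have h1 := hvb t ht.1 ht.2
    have h2 : Complex.abs (v t) = t * Complex.abs (d ((t:ℂ)*z) * z) := by
      simp only [hvdef, map_mul, Complex.abs_ofReal]
      rw [_root_.abs_of_pos ht.1]
      ring
    rw [h2, map_mul] at h1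
    have := ht.1
    rw [Complex.norm_eq_abs, map_mul]
    nlinarith [Complex.abs.nonneg (d ((t:ℂ)*z)), Complex.abs.nonneg z]
  have hnorm2 := intervalIntegral.norm_integral_le_of_norm_le_const hbound2
  rw [hFTC2] at hnorm2
  have : Complex.abs (p (((1:ℝ):ℂ)*z) - p (((0:ℝ):ℂ)*z)) ≤ K * |(1:ℝ) - 0| := hnorm2
  simpa [hp0, hK] using this

theorem stmt15 (β₁ β₂ : ℝ) (hβ₁ : 0 < β₁) (hβ₂ : 0 < β₂)
    (hcond : (2 * β₁ - β₂) ≥ Real.sqrt 2 * Real.pi)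
    (p : ℂ → ℂ) (hp : AnalyticOnNhd ℂ p (ball 0 1)) (hp0 : p 0 = 1)
    (hsub : ∀ z ∈ ball (0 : ℂ) 1,
      ∃ w ∈ ball (0 : ℂ) 1, (1 + (β₁ : ℂ) * z * deriv p z + (β₂ : ℂ) * z ^ 2 * deriv (deriv p) z) = 1 + Complex.log (w + (1 + w ^ 2) ^ ((1 : ℂ) / 2))) :
    ∀ z ∈ ball (0 : ℂ) 1, ∃ w ∈ ball (0 : ℂ) 1, p z = 1 + Complex.log (w + (1 + w ^ 2) ^ ((1 : ℂ) / 2)) := by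
  intro z hz
  have hzlt : Complex.abs z < 1 := by simpa [mem_ball, Complex.dist_eq] using hz
  have hgball : ∀ ζ ∈ ball (0:ℂ) 1,
      Complex.abs ((β₁:ℂ)*ζ*deriv p ζ + (β₂:ℂ)*ζ^2*deriv (deriv p) ζ) < myM := by
    intro ζ hζ
    obtain ⟨w, hw, heq⟩ := hsub ζ hζ
    have hwlt : Complex.abs w < 1 := by simpa [mem_ball, Complex.dist_eq] using hw
    have heq' : (β₁:ℂ)*ζ*deriv p ζ + (β₂:ℂ)*ζ^2*deriv (deriv p) ζ
        = Complex.log (w + (1+w^2) ^ ((1:ℂ)/2)) := by linear_combination heq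
    rw [heq']
    exact keyLog hwlt
  have hcore := core β₁ β₂ myM hβ₁ hβ₂ myM_pos p hp hp0 hgball hz
  have hs2pos : (0:ℝ) < Real.sqrt 2 * Real.pi / 2 := by
    have := Real.pi_pos
    nlinarith [sqrt2_gt]
  have hβ₁' : Real.sqrt 2 * Real.pi / 2 < β₁ := by nlinarith
  have c1 : myM * Complex.abs z / β₁ ≤ myM / β₁ := by
    have hnum : myM * Complex.abs z ≤ myM := by nlinarith [myM_pos, Complex.abs.nonneg z]
    exact (div_le_div_iff_of_pos_right hβ₁).mpr hnum
  have c2 : myM / β₁ < myM / (Real.sqrt 2 * Real.pi / 2) :=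
    div_lt_div_of_pos_left myM_pos hs2pos hβ₁'
  have c3 : myM / (Real.sqrt 2 * Real.pi / 2) ≤ myΛ := by
    rw [div_le_iff₀ hs2pos]
    calc myM ≤ Real.sqrt 2 * Real.pi / 2 * myΛ := myM_le
      _ = myΛ * (Real.sqrt 2 * Real.pi / 2) := by ring
  have hlt : Complex.abs (p z - 1) < myΛ := by linarith
  obtain ⟨w, hw, he⟩ := recon hlt
  exact ⟨w, hw, by linear_combination he⟩
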